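/- Let β be a partition and let k be an integer at least the number of parts of β (i.e. k ≥ β'_1). Let λ be the partition (k, β'_1, β'_2, …) obtained by prepending k to the conjugate partition β'. Then q^{binom(|β|+1, 2)}·s_β(1, q, …, q^{k−1}) = f_{λ,|β|}(q); that is, up to the power shift q^{binom(|β|+1,2)}, the principal specialization s_β(1,q,…,q^{k−1}) of the Schur polynomial indexed by β equals the distribution of the major index over all standard Young tableaux of shape λ with the maximum possible number |β| of descents. -/

import Mathlib

open Polynomial
open scoped Classical

noncomputable section

/-- The set of cells of the skew shape `outer \ inner`, where `outer` and `inner` are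
lists of row lengths (rows and columns are 0-indexed): the cell `(r, c)` is present
iff `inner.getD r 0 ≤ c < outer.getD r 0`. -/
def skewCells (outer inner : List ℕ) : Finset (ℕ × ℕ) :=
  ((Finset.range outer.length) ×ˢ (Finset.range (outer.foldr max 0))).filter
    (fun p => inner.getD p.1 0 ≤ p.2 ∧ p.2 < outer.getD p.1 0)

/-- `pos` encodes a standard Young tableau of skew shape `outer \ inner`:
`pos k` is the cell containing the entry `k + 1`.  The conditions say that the
entries are a bijective filling which increases left to right along rows and
top to bottom down columns. -/
def IsSYT (outer inner : List ℕ)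
    (pos : Fin (skewCells outer inner).card → ↥(skewCells outer inner)) : Prop :=
  Function.Injective pos ∧
  (∀ a b, ((pos a : ℕ × ℕ)).1 = ((pos b : ℕ × ℕ)).1 →
      ((pos a : ℕ × ℕ)).2 < ((pos b : ℕ × ℕ)).2 → a < b) ∧
  (∀ a b, ((pos a : ℕ × ℕ)).2 = ((pos b : ℕ × ℕ)).2 →
      ((pos a : ℕ × ℕ)).1 < ((pos b : ℕ × ℕ)).1 → a < b)

/-- The finite set of standard Young tableaux of skew shape `outer \ inner`. -/
def SYTs (outer inner : List ℕ) :
    Finset (Fin (skewCells outer inner).card → ↥(skewCells outer inner)) :=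
  Finset.univ.filter (IsSYT outer inner)

/-- The descent set of the tableau `pos`: the values `v` such that `v + 1` lies in a
strictly lower row than `v` (entry `v` is at index `v - 1`, entry `v+1` at index `v`). -/
def desSet (outer inner : List ℕ)
    (pos : Fin (skewCells outer inner).card → ↥(skewCells outer inner)) : Finset ℕ :=
  (Finset.range (skewCells outer inner).card).filter
    (fun v => ∃ a b : Fin (skewCells outer inner).card,
      (a : ℕ) + 1 = v ∧ (b : ℕ) = v ∧ ((pos a : ℕ × ℕ)).1 < ((pos b : ℕ × ℕ)).1)

/-- The major index of a tableau: the sum of its descents. -/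
def majStat (outer inner : List ℕ)
    (pos : Fin (skewCells outer inner).card → ↥(skewCells outer inner)) : ℕ :=
  (desSet outer inner pos).sum id

/-- The number of descents of a tableau. -/
def desStat (outer inner : List ℕ)
    (pos : Fin (skewCells outer inner).card → ↥(skewCells outer inner)) : ℕ :=
  (desSet outer inner pos).card

/-- `f_{outer∖inner, i}(q) = Σ_{τ ∈ SYT(outer∖inner), des(τ) = i} q^{maj(τ)} ∈ ℤ[q]`. -/
def fSkew (outer inner : List ℕ) (i : ℕ) : Polynomial ℤ :=
  ∑ pos ∈ (SYTs outer inner).filter (fun pos => desStat outer inner pos = i),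
    X ^ majStat outer inner pos

/-- `f_{λ, i}(q)` for a straight (non-skew) shape `λ`. -/
def fPoly (lam : List ℕ) (i : ℕ) : Polynomial ℤ := fSkew lam [] i

/-- Gaussian binomial coefficients for natural arguments, via the q-Pascal recurrence
`[M+1, N+1]_q = [M, N+1]_q + q^(M-N) [M, N]_q`, with `[M, 0]_q = 1`, `[0, N+1]_q = 0`. -/
def qBinomAux : ℕ → ℕ → Polynomial ℤ
  | _, 0 => 1
  | 0, _ + 1 => 0
  | M + 1, N + 1 => qBinomAux M (N + 1) + X ^ (M - N) * qBinomAux M N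

/-- Gaussian binomial coefficient `[M choose N]_q ∈ ℤ[q]`, with the convention that
it is `0` unless `0 ≤ N ≤ M`. -/
def qBinom (M N : ℤ) : Polynomial ℤ :=
  if 0 ≤ N ∧ N ≤ M then qBinomAux M.toNat N.toNat else 0

/-- The conjugate partition of `μ` (as a list of row lengths): part `j` (0-indexed)
is the number of parts of `μ` exceeding `j`. -/
def conj (mu : List ℕ) : List ℕ :=
  (List.range (mu.headD 0)).map (fun j => (mu.filter (fun x => j < x)).length)

/-- The principal specialization `s_μ(1, q, q², …, q^{m-1})` of the Schur polynomial:
the sum over semistandard Young tableaux of shape `μ` with entries in `{1,…,m}`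
(here 0-indexed as `Fin m`, an entry `e` contributing weight `q^e`, i.e. `x_i = q^{i-1}`)
of `q^{Σ_cells (entry - 1)}`.  Rows weakly increase and columns strictly increase. -/
def schurSpec (mu : List ℕ) (m : ℕ) : Polynomial ℤ :=
  ∑ T ∈ Finset.univ.filter
      (fun T : (↥(skewCells mu []) → Fin m) =>
        (∀ p q : ↥(skewCells mu []), ((p : ℕ × ℕ)).1 = ((q : ℕ × ℕ)).1 →
            ((p : ℕ × ℕ)).2 ≤ ((q : ℕ × ℕ)).2 → T p ≤ T q) ∧
        (∀ p q : ↥(skewCells mu []), ((p : ℕ × ℕ)).2 = ((q : ℕ × ℕ)).2 →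
            ((p : ℕ × ℕ)).1 < ((q : ℕ × ℕ)).1 → T p < T q)),
    X ^ (∑ p : ↥(skewCells mu []), ((T p : ℕ)))

namespace S13

lemma le_foldr_max {l : List ℕ} {x : ℕ} (hx : x ∈ l) : x ≤ l.foldr max 0 := by
  induction l with
  | nil => cases hx
  | cons a t ih =>
    rcases List.mem_cons.mp hx with h | h
    · simp [h]
    · exact le_trans (ih h) (le_max_right _ _)

lemma foldr_max_le {l : List ℕ} {m : ℕ} (h : ∀ x ∈ l, x ≤ m) : l.foldr max 0 ≤ m := by
  induction l with
  | nil => simp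
  | cons a t ih =>
    simp only [List.foldr_cons, max_le_iff]
    exact ⟨h a (by simp), ih (fun x hx => h x (by simp [hx]))⟩

lemma mem_cells_iff (outer : List ℕ) (p : ℕ × ℕ) :
    p ∈ skewCells outer [] ↔ p.1 < outer.length ∧ p.2 < outer.getD p.1 0 := by
  unfold skewCells
  rw [Finset.mem_filter]
  simp only [Finset.mem_filter, Finset.mem_product, Finset.mem_range, List.getD_nil]
  constructor
  · rintro ⟨⟨h1, _⟩, _, h4⟩; exact ⟨h1, h4⟩
  · rintro ⟨h1, h2⟩
    refine ⟨⟨h1, lt_of_lt_of_le h2 (le_foldr_max ?_)⟩, Nat.zero_le _, h2⟩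
    rw [List.getD_eq_getElem _ _ h1]
    exact List.getElem_mem _

lemma sorted_le_head {l : List ℕ} (h : List.Pairwise (· ≥ ·) l) {x} (hx : x ∈ l) :
    x ≤ l.headD 0 := by
  cases l with
  | nil => cases hx
  | cons a t =>
    rcases List.mem_cons.mp hx with h' | h'
    · simp [h']
    · exact (List.pairwise_cons.mp h).1 x h'

lemma count_gt_iff {l : List ℕ} (h : List.Pairwise (· ≥ ·) l) (a b : ℕ) :
    (a < l.length ∧ b < l.getD a 0) ↔ a < (l.filter (fun x => b < x)).length := by
  induction l generalizing a with
  | nil => simp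
  | cons x xs ih =>
    obtain ⟨hx, hs⟩ := List.pairwise_cons.mp h
    cases a with
    | zero =>
      simp only [List.length_cons, List.getD_cons_zero]
      constructor
      · rintro ⟨-, hbx⟩
        rw [List.filter_cons_of_pos (by simpa using hbx)]
        simp
      · intro hf
        refine ⟨Nat.succ_pos _, ?_⟩
        by_contra hbx
        push_neg at hbx
        have : (x :: xs).filter (fun y => decide (b < y)) = [] := by
          apply List.filter_eq_nil_iff.mpr
          intro y hy
          rcases List.mem_cons.mp hy with rfl | hy'
          · simpa using Nat.not_lt.mpr hbx
          · simpa using Nat.not_lt.mpr (le_trans (hx y hy') hbx)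
        rw [this] at hf
        simp at hf
    | succ a =>
      simp only [List.length_cons, List.getD_cons_succ, Nat.succ_lt_succ_iff]
      rw [ih hs a]
      by_cases hbx : b < x
      · rw [List.filter_cons_of_pos (by simpa using hbx)]
        simp [Nat.succ_lt_succ_iff]
      · have hnil : xs.filter (fun y => decide (b < y)) = [] := by
          apply List.filter_eq_nil_iff.mpr
          intro y hy
          simpa using Nat.not_lt.mpr (le_trans (hx y hy) (Nat.not_lt.mp hbx))
        rw [List.filter_cons_of_neg (by simpa using hbx), hnil]
        simp

lemma conj_length (l : List ℕ) : (conj l).length = l.headD 0 := by simp [conj]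

lemma conj_getD {l : List ℕ} {j : ℕ} (hj : j < l.headD 0) :
    (conj l).getD j 0 = (l.filter (fun x => j < x)).length := by
  rw [List.getD_eq_getElem _ _ (by simpa [conj_length] using hj)]
  simp [conj]

lemma conj_mem_le_length {l : List ℕ} {y : ℕ} (hy : y ∈ conj l) : y ≤ l.length := by
  simp only [conj, List.mem_map] at hy
  obtain ⟨j, -, rfl⟩ := hy
  exact List.length_filter_le _ _

lemma list_range_map_sum (m : ℕ) (f : ℕ → ℕ) :
    ((List.range m).map f).sum = ∑ j ∈ Finset.range m, f j := by
  induction m with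
  | zero => simp
  | succ m ih => simp [List.range_succ, Finset.sum_range_succ, ih]

lemma sum_filter_lengths (l : List ℕ) (m : ℕ) :
    ∑ j ∈ Finset.range m, (l.filter (fun x => j < x)).length
      = (l.map (fun x => min x m)).sum := by
  induction l with
  | nil => simp
  | cons x xs ih =>
    have : ∀ j, ((x :: xs).filter (fun y => decide (j < y))).length
        = (if j < x then 1 else 0) + (xs.filter (fun y => decide (j < y))).length := by
      intro j
      by_cases h : j < x
      · rw [List.filter_cons_of_pos (by simpa using h)]; simp [h, Nat.add_comm]
      · rw [List.filter_cons_of_neg (by simpa using h)]; simp [h]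
    simp only [this, Finset.sum_add_distrib, ih, List.map_cons, List.sum_cons]
    congr 1
    have hr : (Finset.range m).filter (fun j => j < x) = Finset.range (min x m) := by
      ext j; simp only [Finset.mem_filter, Finset.mem_range, Nat.lt_min]; omega
    rw [Finset.sum_ite, Finset.sum_const, Finset.sum_const_zero, add_zero, hr,
      Finset.card_range, smul_eq_mul, mul_one]

lemma conj_sum {l : List ℕ} (h : List.Pairwise (· ≥ ·) l) : (conj l).sum = l.sum := by
  rw [conj, list_range_map_sum, sum_filter_lengths]
  have : ∀ x ∈ l, min x (l.headD 0) = x := fun x hx => min_eq_left (sorted_le_head h hx)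
  rw [List.map_congr_left this]; simp

end S13
namespace S13

lemma memL0_iff {beta : List ℕ} {k c : ℕ} :
    ((0 : ℕ), c) ∈ skewCells (k :: conj beta) [] ↔ c < k := by
  rw [mem_cells_iff]
  simp

lemma memL_iff {beta : List ℕ} (hsort : List.Pairwise (· ≥ ·) beta) {k r c : ℕ} :
    ((r + 1 : ℕ), c) ∈ skewCells (k :: conj beta) [] ↔ (c, r) ∈ skewCells beta [] := by
  rw [mem_cells_iff, mem_cells_iff]
  simp only [List.length_cons, conj_length, List.getD_cons_succ]
  by_cases hr : r < beta.headD 0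
  · rw [conj_getD hr]
    rw [show ((c, r).1 < beta.length ∧ (c, r).2 < beta.getD (c, r).1 0) ↔ _ from
      count_gt_iff hsort c r]
    constructor
    · rintro ⟨-, h⟩; exact h
    · intro h; exact ⟨by omega, h⟩
  · constructor
    · rintro ⟨h1, -⟩; omega
    · rintro ⟨h1, h2⟩
      exfalso
      apply hr
      calc r < beta.getD c 0 := h2
        _ ≤ beta.headD 0 := by
          refine sorted_le_head hsort ?_
          rw [List.getD_eq_getElem _ _ h1]
          exact List.getElem_mem _

lemma sum_getD (l : List ℕ) : ∑ r ∈ Finset.range l.length, l.getD r 0 = l.sum := by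
  induction l with
  | nil => simp
  | cons x xs ih =>
    rw [List.length_cons, Finset.sum_range_succ']
    simp only [List.getD_cons_succ, List.getD_cons_zero, List.sum_cons]
    rw [ih, Nat.add_comm]

lemma card_cells (outer : List ℕ) : (skewCells outer []).card = outer.sum := by
  have hdecomp : skewCells outer [] = (Finset.range outer.length).biUnion
      (fun r => ({r} : Finset ℕ) ×ˢ Finset.range (outer.getD r 0)) := by
    ext p
    simp only [mem_cells_iff, Finset.mem_biUnion, Finset.mem_range, Finset.mem_product,
      Finset.mem_singleton]
    constructor
    · rintro ⟨h1, h2⟩; exact ⟨p.1, h1, rfl, h2⟩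
    · rintro ⟨r, hr, rfl, h2⟩; exact ⟨hr, h2⟩
  rw [hdecomp, Finset.card_biUnion, ← sum_getD]
  · congr 1
    ext r
    rw [Finset.card_product, Finset.card_singleton, Finset.card_range, one_mul]
  · intro r _ r' _ hne
    simp only [Finset.disjoint_left]
    rintro ⟨a, b⟩ h1 h2
    simp only [Finset.mem_product, Finset.mem_singleton] at h1 h2
    exact hne (h1.1 ▸ h2.1 ▸ rfl)

lemma card_CL {beta : List ℕ} (hsort : List.Pairwise (· ≥ ·) beta) (k : ℕ) :
    (skewCells (k :: conj beta) []).card = k + beta.sum := by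
  rw [card_cells, List.sum_cons, conj_sum hsort]

end S13
namespace S13

lemma base_lt {Dd A B C A' B' C' : ℕ} (hB : B < Dd) (hC : C < Dd) (hB' : B' < Dd) (hC' : C' < Dd) :
    A * Dd^2 + B * Dd + C < A' * Dd^2 + B' * Dd + C' ↔
      (A < A' ∨ (A = A' ∧ (B < B' ∨ (B = B' ∧ C < C')))) := by
  have mono : ∀ a b c a' b' c' : ℕ, b < Dd → c < Dd →
      (a < a' ∨ (a = a' ∧ (b < b' ∨ (b = b' ∧ c < c')))) →
      a * Dd^2 + b * Dd + c < a' * Dd^2 + b' * Dd + c' := by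
    rintro a b c a' b' c' hb hc (h | ⟨rfl, h | ⟨rfl, h⟩⟩)
    · have h1 : b * Dd + c < Dd^2 := by
        have : (b+1) * Dd ≤ Dd * Dd := Nat.mul_le_mul_right _ (by omega)
        have h2 : Dd * Dd = Dd ^ 2 := (sq Dd).symm
        nlinarith
      have h2 : (a+1) * Dd^2 ≤ a' * Dd^2 := Nat.mul_le_mul_right _ (by omega)
      nlinarith
    · have h2 : (b+1) * Dd ≤ b' * Dd := Nat.mul_le_mul_right _ (by omega)
      nlinarith
    · omega
  constructor
  · intro hlt
    by_contra hmain
    have hle : A' * Dd^2 + B' * Dd + C' ≤ A * Dd^2 + B * Dd + C := by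
      rcases Nat.lt_trichotomy A' A with h | h | h
      · exact le_of_lt (mono _ _ _ _ _ _ hB' hC' (Or.inl h))
      · subst h
        rcases Nat.lt_trichotomy B' B with h2 | h2 | h2
        · exact le_of_lt (mono _ _ _ _ _ _ hB' hC' (Or.inr ⟨rfl, Or.inl h2⟩))
        · subst h2
          rcases Nat.lt_trichotomy C' C with h3 | h3 | h3
          · exact le_of_lt (mono _ _ _ _ _ _ hB' hC' (Or.inr ⟨rfl, Or.inr ⟨rfl, h3⟩⟩))
          · omega
          · exact absurd (Or.inr ⟨rfl, Or.inr ⟨rfl, h3⟩⟩) hmain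
        · exact absurd (Or.inr ⟨rfl, Or.inl h2⟩) hmain
      · exact absurd (Or.inl h) hmain
    omega
  · exact mono _ _ _ _ _ _ hB hC

lemma headD_le_sum (l : List ℕ) : l.headD 0 ≤ l.sum := by
  cases l with
  | nil => simp
  | cons x xs => simpa using Nat.le_add_right x xs.sum

lemma lam_foldr {beta : List ℕ} {k : ℕ} (hk : beta.length ≤ k) :
    ((k :: conj beta).foldr max 0) = k := by
  simp only [List.foldr_cons]
  exact max_eq_left (le_trans (foldr_max_le fun x hx => conj_mem_le_length hx) hk)

lemma cell_col_lt_max {outer : List ℕ} {q : ℕ × ℕ} (hq : q ∈ skewCells outer []) :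
    q.2 < outer.foldr max 0 := by
  unfold skewCells at hq
  simp only [Finset.mem_filter, Finset.mem_product, Finset.mem_range] at hq
  exact hq.1.2

section Main
variable (beta : List ℕ) (k : ℕ)

def DD : ℕ := 2 * k + beta.sum + 2

variable {beta k} in
lemma cellL_bounds (hk : beta.length ≤ k) {q : ℕ × ℕ}
    (hq : q ∈ skewCells (k :: conj beta) []) : q.1 < DD beta k ∧ q.2 < DD beta k := by
  have h1 := ((mem_cells_iff _ _).mp hq).1
  simp only [List.length_cons, conj_length] at h1
  have h2 : q.2 < k := by
    have := cell_col_lt_max hq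
    rwa [lam_foldr hk] at this
  have := headD_le_sum beta
  constructor <;> [skip; skip] <;> simp only [DD] <;> omega

def tHat (T : ↥(skewCells beta []) → Fin k) (q : ℕ × ℕ) : ℕ :=
  if h : (q.2, q.1 - 1) ∈ skewCells beta [] then (T ⟨(q.2, q.1 - 1), h⟩ : ℕ) else 0

def c1 (T : ↥(skewCells beta []) → Fin k) (q : ℕ × ℕ) : ℕ :=
  if q.1 = 0 then 2 * q.2 else 2 * tHat beta k T q + 1

def keyT (T : ↥(skewCells beta []) → Fin k) (q : ℕ × ℕ) : ℕ :=
  c1 beta k T q * (DD beta k)^2 + q.1 * (DD beta k) + q.2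

variable {beta k}

lemma keyT_lt_iff (hk : beta.length ≤ k) (T : ↥(skewCells beta []) → Fin k) {q q' : ℕ × ℕ}
    (hq : q ∈ skewCells (k :: conj beta) []) (hq' : q' ∈ skewCells (k :: conj beta) []) :
    keyT beta k T q < keyT beta k T q' ↔
      (c1 beta k T q < c1 beta k T q' ∨ (c1 beta k T q = c1 beta k T q' ∧
        (q.1 < q'.1 ∨ (q.1 = q'.1 ∧ q.2 < q'.2)))) := by
  obtain ⟨hb, hc⟩ := cellL_bounds hk hq
  obtain ⟨hb', hc'⟩ := cellL_bounds hk hq'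
  exact base_lt hb hc hb' hc'

lemma keyT_inj (hk : beta.length ≤ k) (T : ↥(skewCells beta []) → Fin k) {q q' : ℕ × ℕ}
    (hq : q ∈ skewCells (k :: conj beta) []) (hq' : q' ∈ skewCells (k :: conj beta) [])
    (h : keyT beta k T q = keyT beta k T q') : q = q' := by
  have n1 : ¬ keyT beta k T q < keyT beta k T q' := by omega
  have n2 : ¬ keyT beta k T q' < keyT beta k T q := by omega
  rw [keyT_lt_iff hk T hq hq'] at n1
  rw [keyT_lt_iff hk T hq' hq] at n2
  have hco : q.1 = q'.1 ∧ q.2 = q'.2 := by omega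
  exact Prod.ext hco.1 hco.2

variable (beta k) in
def idxT (T : ↥(skewCells beta []) → Fin k) (q : ↥(skewCells (k :: conj beta) [])) : ℕ :=
  ((skewCells (k :: conj beta) []).filter
    (fun r => keyT beta k T r < keyT beta k T q.1)).card

lemma idxT_lt_card (T : ↥(skewCells beta []) → Fin k) (q : ↥(skewCells (k :: conj beta) [])) :
    idxT beta k T q < (skewCells (k :: conj beta) []).card :=
  Finset.card_lt_card ((Finset.filter_ssubset).mpr ⟨q.1, q.2, by simp⟩)

lemma idxT_mono (T : ↥(skewCells beta []) → Fin k) {q q' : ↥(skewCells (k :: conj beta) [])}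
    (h : keyT beta k T q.1 < keyT beta k T q'.1) : idxT beta k T q < idxT beta k T q' := by
  have hq_not : q.1 ∉ (skewCells (k :: conj beta) []).filter
      (fun r => keyT beta k T r < keyT beta k T q.1) := by simp
  have hsub : insert q.1 ((skewCells (k :: conj beta) []).filter
      (fun r => keyT beta k T r < keyT beta k T q.1)) ⊆ (skewCells (k :: conj beta) []).filter
      (fun r => keyT beta k T r < keyT beta k T q'.1) := by
    intro r hr
    rcases Finset.mem_insert.mp hr with rfl | hr
    · exact Finset.mem_filter.mpr ⟨q.2, h⟩
    · have h2 := Finset.mem_filter.mp hr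
      exact Finset.mem_filter.mpr ⟨h2.1, h2.2.trans h⟩
  have := Finset.card_le_card hsub
  rw [Finset.card_insert_of_notMem hq_not] at this
  unfold idxT
  omega

lemma idxT_lt_iff (hk : beta.length ≤ k) (T : ↥(skewCells beta []) → Fin k)
    (q q' : ↥(skewCells (k :: conj beta) [])) :
    idxT beta k T q < idxT beta k T q' ↔ keyT beta k T q.1 < keyT beta k T q'.1 := by
  constructor
  · intro h
    by_contra hn
    rcases Nat.lt_trichotomy (keyT beta k T q.1) (keyT beta k T q'.1) with h1 | h1 | h1
    · exact hn h1
    · rw [Subtype.ext (keyT_inj hk T q.2 q'.2 h1)] at h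
      omega
    · have := idxT_mono T h1
      omega
  · exact idxT_mono T

variable (beta k) in
def fT (T : ↥(skewCells beta []) → Fin k) :
    ↥(skewCells (k :: conj beta) []) → Fin (skewCells (k :: conj beta) []).card :=
  fun q => ⟨idxT beta k T q, idxT_lt_card T q⟩

lemma fT_bijective (hk : beta.length ≤ k) (T : ↥(skewCells beta []) → Fin k) :
    Function.Bijective (fT beta k T) := by
  rw [Fintype.bijective_iff_injective_and_card]
  constructor
  · intro q q' h
    have hidx : idxT beta k T q = idxT beta k T q' := by
      simpa [fT, Fin.mk.injEq] using h
    by_contra hne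
    have hkey : keyT beta k T q.1 ≠ keyT beta k T q'.1 := fun he =>
      hne (Subtype.ext (keyT_inj hk T q.2 q'.2 he))
    rcases Nat.lt_trichotomy (keyT beta k T q.1) (keyT beta k T q'.1) with h1 | h1 | h1
    · have := idxT_mono T h1; omega
    · exact hkey h1
    · have := idxT_mono T h1; omega
  · simp [Fintype.card_coe]

variable (beta k) in
def posT (hk : beta.length ≤ k) (T : ↥(skewCells beta []) → Fin k) :
    Fin (skewCells (k :: conj beta) []).card → ↥(skewCells (k :: conj beta) []) :=
  (Equiv.ofBijective _ (fT_bijective hk T)).symm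

lemma posT_fT (hk : beta.length ≤ k) (T : ↥(skewCells beta []) → Fin k) (q) :
    posT beta k hk T (fT beta k T q) = q := by
  simp [posT, fT, Equiv.ofBijective]
  exact Function.leftInverse_surjInv (fT_bijective hk T) q

lemma fT_posT (hk : beta.length ≤ k) (T : ↥(skewCells beta []) → Fin k) (j) :
    fT beta k T (posT beta k hk T j) = j :=
  (Equiv.ofBijective _ (fT_bijective hk T)).apply_symm_apply j

lemma idxT_posT (hk : beta.length ≤ k) (T : ↥(skewCells beta []) → Fin k) (j) :
    idxT beta k T (posT beta k hk T j) = (j : ℕ) := by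
  have := fT_posT hk T j
  exact congrArg Fin.val this

lemma posT_lt_iff (hk : beta.length ≤ k) (T : ↥(skewCells beta []) → Fin k) (j j') :
    j < j' ↔ keyT beta k T (posT beta k hk T j).1 < keyT beta k T (posT beta k hk T j').1 := by
  rw [← idxT_lt_iff hk T, idxT_posT hk T, idxT_posT hk T, Fin.lt_def]

lemma posT_bijective (hk : beta.length ≤ k) (T : ↥(skewCells beta []) → Fin k) :
    Function.Bijective (posT beta k hk T) :=
  (Equiv.ofBijective _ (fT_bijective hk T)).symm.bijective

end Main
end S13
namespace S13
section PosSide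
variable (beta : List ℕ) (k : ℕ)

def cnt (pos : Fin (skewCells (k :: conj beta) []).card → ↥(skewCells (k :: conj beta) []))
    (m : ℕ) : ℕ :=
  (Finset.univ.filter (fun u : Fin (skewCells (k :: conj beta) []).card =>
    (u : ℕ) < m ∧ ((pos u : ℕ × ℕ)).1 = 0)).card

def iposD (pos : Fin (skewCells (k :: conj beta) []).card → ↥(skewCells (k :: conj beta) []))
    (q : ↥(skewCells (k :: conj beta) [])) : Fin (skewCells (k :: conj beta) []).card :=
  if h : ∃ u, pos u = q then h.choose else ⟨0, Finset.card_pos.mpr ⟨q.1, q.2⟩⟩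

def cell0 {beta : List ℕ} {k : ℕ} (c : ℕ) (hc : c < k) : ↥(skewCells (k :: conj beta) []) :=
  ⟨((0 : ℕ), c), memL0_iff.mpr hc⟩

def eB {beta : List ℕ} {k : ℕ} (hsort : List.Pairwise (· ≥ ·) beta) (p : ↥(skewCells beta [])) :
    ↥(skewCells (k :: conj beta) []) :=
  ⟨(p.1.2 + 1, p.1.1), by rw [memL_iff hsort]; simpa using p.2⟩

variable {beta k}
variable {pos : Fin (skewCells (k :: conj beta) []).card → ↥(skewCells (k :: conj beta) [])}

lemma syt_bijective (h : IsSYT (k :: conj beta) [] pos) : Function.Bijective pos := by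
  rw [Fintype.bijective_iff_injective_and_card]
  exact ⟨h.1, by simp [Fintype.card_coe]⟩

lemma pos_iposD (hbij : Function.Bijective pos) (q) : pos (iposD beta k pos q) = q := by
  have h : ∃ u, pos u = q := hbij.2 q
  simp only [iposD, dif_pos h]
  exact h.choose_spec

lemma iposD_pos (hbij : Function.Bijective pos) (u) : iposD beta k pos (pos u) = u :=
  hbij.1 (pos_iposD hbij _)

lemma card_idx_filter (hbij : Function.Bijective pos) (P : ℕ × ℕ → Prop) [DecidablePred P]
    [DecidablePred (fun u : Fin (skewCells (k :: conj beta) []).card => P ((pos u : ℕ × ℕ)))] :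
    (Finset.univ.filter (fun u => P ((pos u : ℕ × ℕ)))).card
      = ((skewCells (k :: conj beta) []).filter P).card := by
  apply Finset.card_bij (fun u _ => ((pos u : ℕ × ℕ)))
  · intro u hu
    exact Finset.mem_filter.mpr ⟨(pos u).2, (Finset.mem_filter.mp hu).2⟩
  · intro a _ b _ h
    exact hbij.1 (Subtype.coe_injective h)
  · intro q hq
    obtain ⟨hq1, hq2⟩ := Finset.mem_filter.mp hq
    obtain ⟨u, hu⟩ := hbij.2 ⟨q, hq1⟩
    refine ⟨u, Finset.mem_filter.mpr ⟨Finset.mem_univ _, ?_⟩, ?_⟩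
    · rw [hu]; exact hq2
    · rw [hu]

lemma card_row0_cells :
    (((skewCells (k :: conj beta) [])).filter (fun p => p.1 = 0)).card = k := by
  have h : ((skewCells (k :: conj beta) [])).filter (fun p => p.1 = 0)
      = ({0} : Finset ℕ) ×ˢ Finset.range k := by
    ext ⟨a, b⟩
    simp only [Finset.mem_filter, Finset.mem_product, Finset.mem_singleton, Finset.mem_range]
    constructor
    · rintro ⟨h1, rfl⟩
      exact ⟨rfl, memL0_iff.mp h1⟩
    · rintro ⟨rfl, h2⟩
      exact ⟨memL0_iff.mpr h2, rfl⟩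
  rw [h, Finset.card_product]
  simp

lemma card_nonrow0_cells (hsort : List.Pairwise (· ≥ ·) beta) :
    (((skewCells (k :: conj beta) [])).filter (fun p => ¬ p.1 = 0)).card = beta.sum := by
  have := Finset.card_filter_add_card_filter_not
    (s := skewCells (k :: conj beta) []) (p := fun p => p.1 = 0)
  rw [card_row0_cells, card_CL hsort] at this
  omega

lemma card_row0_idx (hbij : Function.Bijective pos) :
    (Finset.univ.filter (fun u => ((pos u : ℕ × ℕ)).1 = 0)).card = k :=
  (card_idx_filter hbij (fun p => p.1 = 0)).trans card_row0_cells

lemma card_nonrow0_idx (hsort : List.Pairwise (· ≥ ·) beta) (hbij : Function.Bijective pos) :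
    (Finset.univ.filter (fun u => ¬ ((pos u : ℕ × ℕ)).1 = 0)).card = beta.sum :=
  (card_idx_filter hbij (fun p => ¬ p.1 = 0)).trans (card_nonrow0_cells hsort)

lemma desSet_subset_max :
    desSet (k :: conj beta) [] pos ⊆
      (Finset.univ.filter (fun b : Fin (skewCells (k :: conj beta) []).card =>
        0 < (b : ℕ) ∧ ¬ ((pos b : ℕ × ℕ)).1 = 0)).image Fin.val := by
  intro v hv
  unfold desSet at hv
  obtain ⟨-, a, b, ha, hb, hlt⟩ := Finset.mem_filter.mp hv
  have h1 : 0 < (b : ℕ) := by omega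
  have h2 : ¬ ((pos b : ℕ × ℕ)).1 = 0 := by
    intro h0
    rw [h0] at hlt
    exact Nat.not_lt_zero _ hlt
  exact Finset.mem_image.mpr ⟨b, Finset.mem_filter.mpr ⟨Finset.mem_univ _, h1, h2⟩, hb⟩

lemma desSet_eq_max (hsort : List.Pairwise (· ≥ ·) beta) (hsyt : IsSYT (k :: conj beta) [] pos)
    (hdes : desStat (k :: conj beta) [] pos = beta.sum) :
    desSet (k :: conj beta) [] pos =
      (Finset.univ.filter (fun b : Fin (skewCells (k :: conj beta) []).card =>
        0 < (b : ℕ) ∧ ¬ ((pos b : ℕ × ℕ)).1 = 0)).image Fin.val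
    ∧ (Finset.univ.filter (fun b : Fin (skewCells (k :: conj beta) []).card =>
          0 < (b : ℕ) ∧ ¬ ((pos b : ℕ × ℕ)).1 = 0))
        = Finset.univ.filter (fun b : Fin (skewCells (k :: conj beta) []).card =>
          ¬ ((pos b : ℕ × ℕ)).1 = 0) := by
  have hbij := syt_bijective hsyt
  set S := Finset.univ.filter (fun b : Fin (skewCells (k :: conj beta) []).card =>
    0 < (b : ℕ) ∧ ¬ ((pos b : ℕ × ℕ)).1 = 0) with hS
  set F := Finset.univ.filter
    (fun b : Fin (skewCells (k :: conj beta) []).card => ¬ ((pos b : ℕ × ℕ)).1 = 0) with hF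
  have hSF : S ⊆ F := by
    intro b hb
    obtain ⟨-, h1, h2⟩ := Finset.mem_filter.mp hb
    exact Finset.mem_filter.mpr ⟨Finset.mem_univ _, h2⟩
  have hcardF : F.card = beta.sum := card_nonrow0_idx hsort hbij
  have himg : (S.image Fin.val).card = S.card :=
    Finset.card_image_of_injective _ Fin.val_injective
  have hchain : beta.sum ≤ (S.image Fin.val).card := by
    rw [← hdes]
    exact Finset.card_le_card desSet_subset_max
  have hcardS : S.card = beta.sum := le_antisymm (hcardF ▸ Finset.card_le_card hSF) (by omega)
  constructor
  · apply Finset.eq_of_subset_of_card_le desSet_subset_max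
    unfold desStat at hdes
    rw [← hS]
    omega
  · exact Finset.eq_of_subset_of_card_le hSF (by omega)

lemma row_pos_zero (hsort : List.Pairwise (· ≥ ·) beta) (hsyt : IsSYT (k :: conj beta) [] pos)
    (hdes : desStat (k :: conj beta) [] pos = beta.sum)
    (j : Fin (skewCells (k :: conj beta) []).card) (hj : (j : ℕ) = 0) :
    ((pos j : ℕ × ℕ)).1 = 0 := by
  by_contra hne
  have h := (desSet_eq_max hsort hsyt hdes).2
  have : j ∈ Finset.univ.filter
      (fun b : Fin (skewCells (k :: conj beta) []).card => ¬ ((pos b : ℕ × ℕ)).1 = 0) :=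
    Finset.mem_filter.mpr ⟨Finset.mem_univ _, hne⟩
  rw [← h] at this
  obtain ⟨-, h1, -⟩ := Finset.mem_filter.mp this
  omega

lemma des_step (hsort : List.Pairwise (· ≥ ·) beta) (hsyt : IsSYT (k :: conj beta) [] pos)
    (hdes : desStat (k :: conj beta) [] pos = beta.sum)
    (i j : Fin (skewCells (k :: conj beta) []).card)
    (hj : ¬ ((pos j : ℕ × ℕ)).1 = 0) (hij : (i : ℕ) + 1 = (j : ℕ)) :
    ((pos i : ℕ × ℕ)).1 < ((pos j : ℕ × ℕ)).1 := by
  have h := (desSet_eq_max hsort hsyt hdes).1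
  have hjS : (j : ℕ) ∈ desSet (k :: conj beta) [] pos := by
    rw [h]
    exact Finset.mem_image.mpr ⟨j, Finset.mem_filter.mpr ⟨Finset.mem_univ _, by omega, hj⟩, rfl⟩
  unfold desSet at hjS
  obtain ⟨-, a, b, ha, hb, hlt⟩ := Finset.mem_filter.mp hjS
  have hai : a = i := Fin.ext (by omega)
  have hbj : b = j := Fin.ext (by omega)
  rw [hai, hbj] at hlt
  exact hlt

lemma chain_aux (hsort : List.Pairwise (· ≥ ·) beta) (hsyt : IsSYT (k :: conj beta) [] pos)
    (hdes : desStat (k :: conj beta) [] pos = beta.sum) :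
    ∀ d (i j : Fin (skewCells (k :: conj beta) []).card), (j : ℕ) = (i : ℕ) + d + 1 →
    (∀ u : Fin (skewCells (k :: conj beta) []).card,
        (i : ℕ) < (u : ℕ) → (u : ℕ) ≤ (j : ℕ) → ¬ ((pos u : ℕ × ℕ)).1 = 0) →
    ((pos i : ℕ × ℕ)).1 < ((pos j : ℕ × ℕ)).1 := by
  intro d
  induction d with
  | zero =>
    intro i j hd hmid
    exact des_step hsort hsyt hdes i j (hmid j (by omega) (by omega)) (by omega)
  | succ d ih =>
    intro i j hd hmid
    have hj' : (i : ℕ) + d + 1 < (skewCells (k :: conj beta) []).card := by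
      have := j.isLt; omega
    set j' : Fin (skewCells (k :: conj beta) []).card := ⟨(i : ℕ) + d + 1, hj'⟩ with hj'def
    have h1 := ih i j' rfl (fun u hu1 hu2 => hmid u hu1 (by simp [hj'def] at hu2 ⊢; omega))
    have h2 := des_step hsort hsyt hdes j' j (hmid j (by omega) (by omega)) (by simp [hj'def]; omega)
    omega

lemma cnt_mono {m m' : ℕ} (h : m ≤ m') : cnt beta k pos m ≤ cnt beta k pos m' := by
  apply Finset.card_le_card
  intro u hu
  simp only [Finset.mem_filter] at hu ⊢
  exact ⟨hu.1, lt_of_lt_of_le hu.2.1 h, hu.2.2⟩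

lemma cnt_lt (u : Fin (skewCells (k :: conj beta) []).card) {i j : ℕ}
    (h0 : ((pos u : ℕ × ℕ)).1 = 0) (h1 : i ≤ (u : ℕ)) (h2 : (u : ℕ) < j) :
    cnt beta k pos i < cnt beta k pos j := by
  apply Finset.card_lt_card
  have hsub : (Finset.univ.filter (fun u : Fin (skewCells (k :: conj beta) []).card =>
      (u : ℕ) < i ∧ ((pos u : ℕ × ℕ)).1 = 0)) ⊆ (Finset.univ.filter
      (fun u : Fin (skewCells (k :: conj beta) []).card =>
      (u : ℕ) < j ∧ ((pos u : ℕ × ℕ)).1 = 0)) := by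
    intro v hv
    simp only [Finset.mem_filter] at hv ⊢
    exact ⟨hv.1, by omega, hv.2.2⟩
  rw [Finset.ssubset_iff_of_subset hsub]
  refine ⟨u, Finset.mem_filter.mpr ⟨Finset.mem_univ _, h2, h0⟩, ?_⟩
  intro hmem
  obtain ⟨-, hlt, -⟩ := Finset.mem_filter.mp hmem
  omega

lemma cnt_le_k (hbij : Function.Bijective pos) (m : ℕ) : cnt beta k pos m ≤ k := by
  have h1 : (Finset.univ.filter (fun u : Fin (skewCells (k :: conj beta) []).card =>
      (u : ℕ) < m ∧ ((pos u : ℕ × ℕ)).1 = 0)) ⊆ (Finset.univ.filter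
      (fun u : Fin (skewCells (k :: conj beta) []).card => ((pos u : ℕ × ℕ)).1 = 0)) := by
    intro u hu
    simp only [Finset.mem_filter] at hu ⊢
    exact ⟨hu.1, hu.2.2⟩
  have h2 := Finset.card_le_card h1
  rw [card_row0_idx hbij] at h2
  exact h2

lemma card_lt_idx (m : ℕ) (hm : m ≤ (skewCells (k :: conj beta) []).card) :
    (Finset.univ.filter
      (fun u : Fin (skewCells (k :: conj beta) []).card => (u : ℕ) < m)).card = m := by
  conv_rhs => rw [← Finset.card_range m]
  refine Finset.card_bij (fun u _ => (u : ℕ)) ?_ ?_ ?_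
  · intro u hu
    simpa using (Finset.mem_filter.mp hu).2
  · intro a _ b _ h
    exact Fin.val_injective h
  · intro r hr
    have hrm := Finset.mem_range.mp hr
    exact ⟨⟨r, by omega⟩, Finset.mem_filter.mpr ⟨Finset.mem_univ _, hrm⟩, rfl⟩

lemma cnt_split (m : ℕ) (hm : m ≤ (skewCells (k :: conj beta) []).card) :
    cnt beta k pos m
      + (Finset.univ.filter (fun u : Fin (skewCells (k :: conj beta) []).card =>
          (u : ℕ) < m ∧ ¬ ((pos u : ℕ × ℕ)).1 = 0)).card = m := by
  have h := Finset.card_filter_add_card_filter_not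
    (s := Finset.univ.filter
      (fun u : Fin (skewCells (k :: conj beta) []).card => (u : ℕ) < m))
    (p := fun u => ((pos u : ℕ × ℕ)).1 = 0)
  rw [Finset.filter_filter, Finset.filter_filter, card_lt_idx m hm] at h
  unfold cnt
  convert h using 2

lemma col_lt_of_row0 (u : Fin (skewCells (k :: conj beta) []).card)
    (h0 : ((pos u : ℕ × ℕ)).1 = 0) : ((pos u : ℕ × ℕ)).2 < k := by
  have hm : (((pos u : ℕ × ℕ)).1, ((pos u : ℕ × ℕ)).2) ∈ skewCells (k :: conj beta) [] := by
    simpa using (pos u).2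
  rw [h0] at hm
  exact memL0_iff.mp hm

lemma pos_eq_cell0 (u : Fin (skewCells (k :: conj beta) []).card)
    (h0 : ((pos u : ℕ × ℕ)).1 = 0) :
    pos u = cell0 ((pos u : ℕ × ℕ)).2 (col_lt_of_row0 u h0) :=
  Subtype.ext (Prod.ext h0 rfl)

lemma cnt_i0 (hsyt : IsSYT (k :: conj beta) [] pos) {c : ℕ} (hc : c < k) :
    cnt beta k pos ((iposD beta k pos (cell0 c hc) : ℕ)) = c := by
  have hbij := syt_bijective hsyt
  unfold cnt
  conv_rhs => rw [← Finset.card_range c]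
  refine Finset.card_bij (fun (u : Fin (skewCells (k :: conj beta) []).card) _ =>
    ((pos u : ℕ × ℕ)).2) ?_ ?_ ?_
  · intro u hu
    obtain ⟨-, hlt, h0⟩ := Finset.mem_filter.mp hu
    have hcol := col_lt_of_row0 u h0
    rw [Finset.mem_range]
    rcases Nat.lt_trichotomy ((pos u : ℕ × ℕ)).2 c with h | h | h
    · exact h
    · exfalso
      have hpu : pos u = cell0 c hc := Subtype.ext (Prod.ext h0 h)
      have : u = iposD beta k pos (cell0 c hc) := by
        rw [← iposD_pos hbij u, hpu]
      omega
    · exfalso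
      have hic := pos_iposD hbij (cell0 (beta := beta) c hc)
      have hlt2 := hsyt.2.1 (iposD beta k pos (cell0 c hc)) u
        (by rw [hic]; exact h0.symm) (by rw [hic]; exact h)
      have := Fin.lt_def.mp hlt2
      omega
  · intro a ha b hb h
    obtain ⟨-, -, h0a⟩ := Finset.mem_filter.mp ha
    obtain ⟨-, -, h0b⟩ := Finset.mem_filter.mp hb
    exact hbij.1 (Subtype.ext (Prod.ext (h0a.trans h0b.symm) h))
  · intro c' hc'
    have hc'c := Finset.mem_range.mp hc'
    have hc'k : c' < k := lt_trans hc'c hc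
    have h1 := pos_iposD hbij (cell0 (beta := beta) c' hc'k)
    have h2 := pos_iposD hbij (cell0 (beta := beta) c hc)
    refine ⟨iposD beta k pos (cell0 c' hc'k), ?_, ?_⟩
    · refine Finset.mem_filter.mpr ⟨Finset.mem_univ _, ?_, ?_⟩
      · have hlt2 := hsyt.2.1 (iposD beta k pos (cell0 c' hc'k)) (iposD beta k pos (cell0 c hc))
          (by rw [h1, h2]; rfl) (by rw [h1, h2]; exact hc'c)
        exact Fin.lt_def.mp hlt2
      · rw [h1]; rfl
    · show ((pos (iposD beta k pos (cell0 c' hc'k)) : ℕ × ℕ)).2 = c'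
      rw [h1]; rfl

end PosSide
end S13
namespace S13
section Phi
variable (beta : List ℕ) (k : ℕ)

def toB {beta : List ℕ} {k : ℕ} (hsort : List.Pairwise (· ≥ ·) beta)
    (q : ↥(skewCells (k :: conj beta) [])) (hq : ((q : ℕ × ℕ)).1 ≠ 0) :
    ↥(skewCells beta []) :=
  ⟨((q : ℕ × ℕ).2, (q : ℕ × ℕ).1 - 1), by
    apply (memL_iff hsort (k := k)).mp
    have h : (((q : ℕ × ℕ).1 - 1) + 1, (q : ℕ × ℕ).2) = (q : ℕ × ℕ) :=
      Prod.ext (by omega) rfl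
    rw [h]
    exact q.2⟩

lemma eB_toB {beta : List ℕ} {k : ℕ} (hsort : List.Pairwise (· ≥ ·) beta)
    (q : ↥(skewCells (k :: conj beta) [])) (hq : ((q : ℕ × ℕ)).1 ≠ 0) :
    eB hsort (toB hsort q hq) = q := by
  apply Subtype.ext
  show ((((q : ℕ × ℕ).2, (q : ℕ × ℕ).1 - 1) : ℕ × ℕ).2 + 1,
    (((q : ℕ × ℕ).2, (q : ℕ × ℕ).1 - 1) : ℕ × ℕ).1) = (q : ℕ × ℕ)
  exact Prod.ext (by simp; omega) rfl

lemma toB_eB {beta : List ℕ} {k : ℕ} (hsort : List.Pairwise (· ≥ ·) beta)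
    (p : ↥(skewCells beta [])) (h : ((eB (k := k) hsort p : ℕ × ℕ)).1 ≠ 0) :
    toB hsort (eB hsort p) h = p := by
  apply Subtype.ext
  show ((p : ℕ × ℕ).1, (p : ℕ × ℕ).2 + 1 - 1) = (p : ℕ × ℕ)
  exact Prod.ext rfl (by omega)

lemma eB_row_ne {beta : List ℕ} {k : ℕ} (hsort : List.Pairwise (· ≥ ·) beta)
    (p : ↥(skewCells beta [])) : ((eB (k := k) hsort p : ℕ × ℕ)).1 ≠ 0 := by
  show (p : ℕ × ℕ).2 + 1 ≠ 0
  omega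

variable {beta k}

lemma tHat_toB (hsort : List.Pairwise (· ≥ ·) beta) (T : ↥(skewCells beta []) → Fin k)
    (q : ↥(skewCells (k :: conj beta) [])) (hq : ((q : ℕ × ℕ)).1 ≠ 0) :
    tHat beta k T (q : ℕ × ℕ) = (T (toB hsort q hq) : ℕ) := by
  unfold tHat
  have h : ((q : ℕ × ℕ).2, (q : ℕ × ℕ).1 - 1) ∈ skewCells beta [] := (toB hsort q hq).2
  rw [dif_pos h]
  rfl

lemma tHat_eB (hsort : List.Pairwise (· ≥ ·) beta) (T : ↥(skewCells beta []) → Fin k)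
    (p : ↥(skewCells beta [])) :
    tHat beta k T ((eB (k := k) hsort p : ℕ × ℕ)) = (T p : ℕ) := by
  rw [tHat_toB hsort T _ (eB_row_ne hsort p), toB_eB]

lemma tHat_lt_k (hsort : List.Pairwise (· ≥ ·) beta) (T : ↥(skewCells beta []) → Fin k)
    (q : ↥(skewCells (k :: conj beta) [])) (hq : ((q : ℕ × ℕ)).1 ≠ 0) :
    tHat beta k T (q : ℕ × ℕ) < k := by
  rw [tHat_toB hsort T q hq]
  exact (T (toB hsort q hq)).isLt

/-- Entries strictly increase down column 0, so `T (i, 0) ≥ i`. -/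
lemma T_col0_ge (hpos : ∀ x ∈ beta, 0 < x) (T : ↥(skewCells beta []) → Fin k)
    (hT2 : ∀ p q : ↥(skewCells beta []), ((p : ℕ × ℕ)).2 = ((q : ℕ × ℕ)).2 →
      ((p : ℕ × ℕ)).1 < ((q : ℕ × ℕ)).1 → T p < T q) :
    ∀ i (hi : ((i, 0) : ℕ × ℕ) ∈ skewCells beta []), i ≤ (T ⟨(i, 0), hi⟩ : ℕ) := by
  intro i
  induction i with
  | zero => intro hi; exact Nat.zero_le _
  | succ i ih =>
    intro hi
    have hmem : i + 1 < beta.length ∧ 0 < beta.getD (i + 1) 0 := (mem_cells_iff beta _).mp hi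
    have hlen : i < beta.length := by omega
    have hgd : 0 < beta.getD i 0 := by
      apply hpos
      rw [List.getD_eq_getElem _ _ hlen]
      exact List.getElem_mem _
    have hi' : ((i, 0) : ℕ × ℕ) ∈ skewCells beta [] := by
      rw [mem_cells_iff]
      exact ⟨hlen, hgd⟩
    have hstep := hT2 ⟨(i, 0), hi'⟩ ⟨(i + 1, 0), hi⟩ rfl (by show i < i + 1; omega)
    have := ih hi'
    have hlt : (T ⟨(i, 0), hi'⟩ : ℕ) < (T ⟨(i + 1, 0), hi⟩ : ℕ) := hstep
    omega

/-- `T (a, b) ≥ a` for any cell. -/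
lemma T_ge_row (hpos : ∀ x ∈ beta, 0 < x) (T : ↥(skewCells beta []) → Fin k)
    (hT1 : ∀ p q : ↥(skewCells beta []), ((p : ℕ × ℕ)).1 = ((q : ℕ × ℕ)).1 →
      ((p : ℕ × ℕ)).2 ≤ ((q : ℕ × ℕ)).2 → T p ≤ T q)
    (hT2 : ∀ p q : ↥(skewCells beta []), ((p : ℕ × ℕ)).2 = ((q : ℕ × ℕ)).2 →
      ((p : ℕ × ℕ)).1 < ((q : ℕ × ℕ)).1 → T p < T q)
    (p : ↥(skewCells beta [])) : ((p : ℕ × ℕ)).1 ≤ (T p : ℕ) := by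
  have hmem : (p : ℕ × ℕ).1 < beta.length ∧ (p : ℕ × ℕ).2 < beta.getD (p : ℕ × ℕ).1 0 :=
    (mem_cells_iff beta _).mp p.2
  have hgd : 0 < beta.getD (p : ℕ × ℕ).1 0 := by omega
  have h0 : (((p : ℕ × ℕ).1, 0) : ℕ × ℕ) ∈ skewCells beta [] := by
    rw [mem_cells_iff]
    exact ⟨hmem.1, hgd⟩
  have h1 := T_col0_ge hpos T hT2 ((p : ℕ × ℕ)).1 h0
  have h2 : T ⟨((p : ℕ × ℕ).1, 0), h0⟩ ≤ T p :=
    hT1 ⟨((p : ℕ × ℕ).1, 0), h0⟩ p rfl (Nat.zero_le _)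
  have h2' : (T ⟨((p : ℕ × ℕ).1, 0), h0⟩ : ℕ) ≤ (T p : ℕ) := h2
  omega

variable (beta k) in
def PhiD (hsort : List.Pairwise (· ≥ ·) beta) (hk : beta.length ≤ k)
    (pos : Fin (skewCells (k :: conj beta) []).card → ↥(skewCells (k :: conj beta) []))
    (p : ↥(skewCells beta [])) : Fin k :=
  ⟨min (cnt beta k pos ((iposD beta k pos (eB hsort p) : ℕ)) - 1) (k - 1), by
    have hmem := (mem_cells_iff beta _).mp p.2
    have hklen : 0 < k := by omega
    omega⟩

variable {pos : Fin (skewCells (k :: conj beta) []).card → ↥(skewCells (k :: conj beta) [])}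

lemma ipos_ne_zero (hsort : List.Pairwise (· ≥ ·) beta) (hsyt : IsSYT (k :: conj beta) [] pos)
    (hdes : desStat (k :: conj beta) [] pos = beta.sum)
    (q : ↥(skewCells (k :: conj beta) [])) (hq : ((q : ℕ × ℕ)).1 ≠ 0) :
    0 < ((iposD beta k pos q : ℕ)) := by
  have hbij := syt_bijective hsyt
  rcases Nat.eq_zero_or_pos ((iposD beta k pos q : ℕ)) with h | h
  · exfalso
    have h0 := row_pos_zero hsort hsyt hdes (iposD beta k pos q) h
    rw [pos_iposD hbij] at h0
    exact hq h0
  · exact h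

lemma cnt_ipos_ge1 (hsort : List.Pairwise (· ≥ ·) beta) (hsyt : IsSYT (k :: conj beta) [] pos)
    (hdes : desStat (k :: conj beta) [] pos = beta.sum)
    (q : ↥(skewCells (k :: conj beta) [])) (hq : ((q : ℕ × ℕ)).1 ≠ 0) :
    1 ≤ cnt beta k pos ((iposD beta k pos q : ℕ)) := by
  have hbij := syt_bijective hsyt
  have hne := ipos_ne_zero hsort hsyt hdes q hq
  have hN : 0 < (skewCells (k :: conj beta) []).card := (iposD beta k pos q).isLt.trans_le'
    (Nat.zero_le _) |>.trans_le (le_refl _)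
  rcases Nat.eq_zero_or_pos (cnt beta k pos ((iposD beta k pos q : ℕ))) with h | h
  · exfalso
    have hzero : (⟨0, by omega⟩ : Fin (skewCells (k :: conj beta) []).card) ∈
        Finset.univ.filter (fun u : Fin (skewCells (k :: conj beta) []).card =>
          (u : ℕ) < ((iposD beta k pos q : ℕ)) ∧ ((pos u : ℕ × ℕ)).1 = 0) := by
      refine Finset.mem_filter.mpr ⟨Finset.mem_univ _, hne, ?_⟩
      exact row_pos_zero hsort hsyt hdes _ rfl
    have := Finset.card_pos.mpr ⟨_, hzero⟩
    unfold cnt at h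
    omega
  · exact h

lemma PhiD_val (hsort : List.Pairwise (· ≥ ·) beta) (hk : beta.length ≤ k)
    (hsyt : IsSYT (k :: conj beta) [] pos)
    (hdes : desStat (k :: conj beta) [] pos = beta.sum) (p : ↥(skewCells beta [])) :
    (PhiD beta k hsort hk pos p : ℕ)
      = cnt beta k pos ((iposD beta k pos (eB hsort p) : ℕ)) - 1 := by
  have hbij := syt_bijective hsyt
  have h1 := cnt_le_k hbij ((iposD beta k pos (eB hsort p) : ℕ))
  show min _ _ = _
  omega

lemma cnt_ipos_nonrow0 (hsort : List.Pairwise (· ≥ ·) beta) (hk : beta.length ≤ k)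
    (hsyt : IsSYT (k :: conj beta) [] pos)
    (hdes : desStat (k :: conj beta) [] pos = beta.sum)
    (q : ↥(skewCells (k :: conj beta) [])) (hq : ((q : ℕ × ℕ)).1 ≠ 0) :
    cnt beta k pos ((iposD beta k pos q : ℕ))
      = tHat beta k (PhiD beta k hsort hk pos) (q : ℕ × ℕ) + 1 := by
  rw [tHat_toB hsort _ q hq, PhiD_val hsort hk hsyt hdes, eB_toB hsort q hq]
  have := cnt_ipos_ge1 hsort hsyt hdes q hq
  omega

end Phi
end S13
namespace S13
section PosT
variable {beta : List ℕ} {k : ℕ}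

lemma c1_row0 (T : ↥(skewCells beta []) → Fin k) {q : ℕ × ℕ} (h0 : q.1 = 0) :
    c1 beta k T q = 2 * q.2 := if_pos h0

lemma c1_nonrow0 (T : ↥(skewCells beta []) → Fin k) {q : ℕ × ℕ} (h0 : ¬ q.1 = 0) :
    c1 beta k T q = 2 * tHat beta k T q + 1 := if_neg h0

lemma key_row_lt (hsort : List.Pairwise (· ≥ ·) beta) (hk : beta.length ≤ k)
    (T : ↥(skewCells beta []) → Fin k)
    (hT2 : ∀ p q : ↥(skewCells beta []), ((p : ℕ × ℕ)).2 = ((q : ℕ × ℕ)).2 →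
      ((p : ℕ × ℕ)).1 < ((q : ℕ × ℕ)).1 → T p < T q)
    {q q' : ↥(skewCells (k :: conj beta) [])}
    (hrow : ((q : ℕ × ℕ)).1 = ((q' : ℕ × ℕ)).1) (hcol : ((q : ℕ × ℕ)).2 < ((q' : ℕ × ℕ)).2) :
    keyT beta k T (q : ℕ × ℕ) < keyT beta k T (q' : ℕ × ℕ) := by
  rw [keyT_lt_iff hk T q.2 q'.2]
  by_cases h0 : ((q : ℕ × ℕ)).1 = 0
  · left
    rw [c1_row0 T h0, c1_row0 T (hrow ▸ h0)]
    omega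
  · left
    have h0' : ¬ ((q' : ℕ × ℕ)).1 = 0 := hrow ▸ h0
    rw [c1_nonrow0 T h0, c1_nonrow0 T h0', tHat_toB hsort T q h0, tHat_toB hsort T q' h0']
    have hT := hT2 (toB hsort q h0) (toB hsort q' h0')
      (by show ((q : ℕ × ℕ)).1 - 1 = ((q' : ℕ × ℕ)).1 - 1; omega)
      (by show ((q : ℕ × ℕ)).2 < ((q' : ℕ × ℕ)).2; omega)
    have hT' : (T (toB hsort q h0) : ℕ) < (T (toB hsort q' h0') : ℕ) := hT
    omega

lemma key_col_lt (hsort : List.Pairwise (· ≥ ·) beta) (hpos : ∀ x ∈ beta, 0 < x)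
    (hk : beta.length ≤ k) (T : ↥(skewCells beta []) → Fin k)
    (hT1 : ∀ p q : ↥(skewCells beta []), ((p : ℕ × ℕ)).1 = ((q : ℕ × ℕ)).1 →
      ((p : ℕ × ℕ)).2 ≤ ((q : ℕ × ℕ)).2 → T p ≤ T q)
    (hT2 : ∀ p q : ↥(skewCells beta []), ((p : ℕ × ℕ)).2 = ((q : ℕ × ℕ)).2 →
      ((p : ℕ × ℕ)).1 < ((q : ℕ × ℕ)).1 → T p < T q)
    {q q' : ↥(skewCells (k :: conj beta) [])}
    (hcol : ((q : ℕ × ℕ)).2 = ((q' : ℕ × ℕ)).2) (hrow : ((q : ℕ × ℕ)).1 < ((q' : ℕ × ℕ)).1) :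
    keyT beta k T (q : ℕ × ℕ) < keyT beta k T (q' : ℕ × ℕ) := by
  rw [keyT_lt_iff hk T q.2 q'.2]
  have h0' : ¬ ((q' : ℕ × ℕ)).1 = 0 := by omega
  have hge := T_ge_row hpos T hT1 hT2 (toB hsort q' h0')
  have hgecol : ((q' : ℕ × ℕ)).2 ≤ (T (toB hsort q' h0') : ℕ) := hge
  by_cases h0 : ((q : ℕ × ℕ)).1 = 0
  · left
    rw [c1_row0 T h0, c1_nonrow0 T h0', tHat_toB hsort T q' h0']
    omega
  · have hT := hT1 (toB hsort q h0) (toB hsort q' h0')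
      (by show ((q : ℕ × ℕ)).2 = ((q' : ℕ × ℕ)).2; omega)
      (by show ((q : ℕ × ℕ)).1 - 1 ≤ ((q' : ℕ × ℕ)).1 - 1; omega)
    have hT' : (T (toB hsort q h0) : ℕ) ≤ (T (toB hsort q' h0') : ℕ) := hT
    rcases Nat.lt_or_ge (T (toB hsort q h0) : ℕ) (T (toB hsort q' h0') : ℕ) with h | h
    · left
      rw [c1_nonrow0 T h0, c1_nonrow0 T h0', tHat_toB hsort T q h0, tHat_toB hsort T q' h0']
      omega
    · right
      constructor
      · rw [c1_nonrow0 T h0, c1_nonrow0 T h0', tHat_toB hsort T q h0, tHat_toB hsort T q' h0']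
        omega
      · exact Or.inl hrow

lemma posT_isSYT (hsort : List.Pairwise (· ≥ ·) beta) (hpos : ∀ x ∈ beta, 0 < x)
    (hk : beta.length ≤ k) (T : ↥(skewCells beta []) → Fin k)
    (hT1 : ∀ p q : ↥(skewCells beta []), ((p : ℕ × ℕ)).1 = ((q : ℕ × ℕ)).1 →
      ((p : ℕ × ℕ)).2 ≤ ((q : ℕ × ℕ)).2 → T p ≤ T q)
    (hT2 : ∀ p q : ↥(skewCells beta []), ((p : ℕ × ℕ)).2 = ((q : ℕ × ℕ)).2 →
      ((p : ℕ × ℕ)).1 < ((q : ℕ × ℕ)).1 → T p < T q) :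
    IsSYT (k :: conj beta) [] (posT beta k hk T) := by
  refine ⟨(posT_bijective hk T).1, ?_, ?_⟩
  · intro a b hrow hcol
    exact (posT_lt_iff hk T a b).mpr (key_row_lt hsort hk T hT2 hrow hcol)
  · intro a b hcol hrow
    exact (posT_lt_iff hk T a b).mpr (key_col_lt hsort hpos hk T hT1 hT2 hcol hrow)

lemma posT_no_between (hk : beta.length ≤ k) (T : ↥(skewCells beta []) → Fin k)
    {j j' : Fin (skewCells (k :: conj beta) []).card} (hjj : (j : ℕ) + 1 = (j' : ℕ))
    {r : ℕ × ℕ} (hr : r ∈ skewCells (k :: conj beta) []) :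
    ¬ (keyT beta k T ((posT beta k hk T j : ℕ × ℕ)) < keyT beta k T r ∧
       keyT beta k T r < keyT beta k T ((posT beta k hk T j' : ℕ × ℕ))) := by
  rintro ⟨h1, h2⟩
  have ha := idxT_mono T (q := posT beta k hk T j) (q' := ⟨r, hr⟩) h1
  have hb := idxT_mono T (q := ⟨r, hr⟩) (q' := posT beta k hk T j') h2
  rw [idxT_posT hk T] at ha hb
  omega

lemma posT_step (hsort : List.Pairwise (· ≥ ·) beta) (hpos : ∀ x ∈ beta, 0 < x)
    (hk : beta.length ≤ k) (T : ↥(skewCells beta []) → Fin k)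
    (hT2 : ∀ p q : ↥(skewCells beta []), ((p : ℕ × ℕ)).2 = ((q : ℕ × ℕ)).2 →
      ((p : ℕ × ℕ)).1 < ((q : ℕ × ℕ)).1 → T p < T q)
    {i j : Fin (skewCells (k :: conj beta) []).card} (hij : (i : ℕ) + 1 = (j : ℕ))
    (hrow : ¬ ((posT beta k hk T j : ℕ × ℕ)).1 = 0) :
    ((posT beta k hk T i : ℕ × ℕ)).1 < ((posT beta k hk T j : ℕ × ℕ)).1 := by
  set q := posT beta k hk T i with hq
  set q' := posT beta k hk T j with hq'
  have hkey : keyT beta k T (q : ℕ × ℕ) < keyT beta k T (q' : ℕ × ℕ) :=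
    (posT_lt_iff hk T i j).mp (Fin.lt_def.mpr (by omega))
  by_cases h0 : ((q : ℕ × ℕ)).1 = 0
  · omega
  · rw [keyT_lt_iff hk T q.2 q'.2] at hkey
    rw [c1_nonrow0 T h0, c1_nonrow0 T hrow] at hkey
    have htk := tHat_lt_k hsort T q' hrow
    rcases hkey with h | ⟨heq, h | ⟨heq2, hlt⟩⟩
    · -- tHat q < tHat q' : find a row-0 cell strictly between
      exfalso
      set t := tHat beta k T (q : ℕ × ℕ)
      have hmem : (((0 : ℕ), t + 1) : ℕ × ℕ) ∈ skewCells (k :: conj beta) [] :=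
        memL0_iff.mpr (by omega)
      apply posT_no_between hk T hij hmem
      constructor
      · rw [keyT_lt_iff hk T q.2 hmem]
        left
        rw [c1_nonrow0 T h0, c1_row0 T rfl]
        omega
      · rw [keyT_lt_iff hk T hmem q'.2]
        left
        rw [c1_nonrow0 T hrow, c1_row0 T rfl]
        omega
    · exact h
    · -- same row, smaller column: contradicts strictness of T down β-columns
      exfalso
      have hTlt := hT2 (toB hsort q h0) (toB hsort q' hrow)
        (by show ((q : ℕ × ℕ)).1 - 1 = ((q' : ℕ × ℕ)).1 - 1; omega)
        (by show ((q : ℕ × ℕ)).2 < ((q' : ℕ × ℕ)).2; omega)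
      have hTlt' : (T (toB hsort q h0) : ℕ) < (T (toB hsort q' hrow) : ℕ) := hTlt
      rw [tHat_toB hsort T q h0, tHat_toB hsort T q' hrow] at heq
      omega

lemma posT_row0_at0 (hsort : List.Pairwise (· ≥ ·) beta) (hk : beta.length ≤ k)
    (T : ↥(skewCells beta []) → Fin k)
    {j : Fin (skewCells (k :: conj beta) []).card} (hj : (j : ℕ) = 0) :
    ((posT beta k hk T j : ℕ × ℕ)).1 = 0 := by
  by_contra h0
  set q' := posT beta k hk T j with hq'
  have hmemB := (mem_cells_iff beta _).mp (toB hsort q' h0).2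
  have hk0 : 0 < k := by
    have := hmemB.1
    omega
  have hmem : (((0 : ℕ), 0) : ℕ × ℕ) ∈ skewCells (k :: conj beta) [] := memL0_iff.mpr hk0
  have hkey : keyT beta k T (((0 : ℕ), 0) : ℕ × ℕ) < keyT beta k T (q' : ℕ × ℕ) := by
    rw [keyT_lt_iff hk T hmem q'.2]
    left
    rw [c1_row0 T rfl, c1_nonrow0 T h0]
    omega
  have := idxT_mono T (q := ⟨((0 : ℕ), 0), hmem⟩) (q' := q') hkey
  rw [idxT_posT hk T] at this
  omega

lemma posT_des (hsort : List.Pairwise (· ≥ ·) beta) (hpos : ∀ x ∈ beta, 0 < x)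
    (hk : beta.length ≤ k) (T : ↥(skewCells beta []) → Fin k)
    (hT2 : ∀ p q : ↥(skewCells beta []), ((p : ℕ × ℕ)).2 = ((q : ℕ × ℕ)).2 →
      ((p : ℕ × ℕ)).1 < ((q : ℕ × ℕ)).1 → T p < T q) :
    desStat (k :: conj beta) [] (posT beta k hk T) = beta.sum := by
  set pos := posT beta k hk T with hposdef
  have hbij := posT_bijective hk T
  have hSF : (Finset.univ.filter (fun b : Fin (skewCells (k :: conj beta) []).card =>
      0 < (b : ℕ) ∧ ¬ ((pos b : ℕ × ℕ)).1 = 0))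
      = Finset.univ.filter (fun b : Fin (skewCells (k :: conj beta) []).card =>
      ¬ ((pos b : ℕ × ℕ)).1 = 0) := by
    ext b
    simp only [Finset.mem_filter, Finset.mem_univ, true_and]
    constructor
    · rintro ⟨-, h⟩; exact h
    · intro h
      refine ⟨?_, h⟩
      rcases Nat.eq_zero_or_pos (b : ℕ) with hb | hb
      · exact absurd (posT_row0_at0 hsort hk T hb) h
      · exact hb
  have hdeseq : desSet (k :: conj beta) [] pos =
      (Finset.univ.filter (fun b : Fin (skewCells (k :: conj beta) []).card =>
        0 < (b : ℕ) ∧ ¬ ((pos b : ℕ × ℕ)).1 = 0)).image Fin.val := by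
    apply Finset.Subset.antisymm desSet_subset_max
    intro v hv
    obtain ⟨j, hj, rfl⟩ := Finset.mem_image.mp hv
    obtain ⟨-, hj1, hj2⟩ := Finset.mem_filter.mp hj
    unfold desSet
    refine Finset.mem_filter.mpr ⟨Finset.mem_range.mpr j.isLt, ⟨⟨(j : ℕ) - 1, by omega⟩, j,
      by simp; omega, rfl, ?_⟩⟩
    exact posT_step hsort hpos hk T hT2 (by simp; omega) hj2
  unfold desStat
  rw [hdeseq, Finset.card_image_of_injective _ Fin.val_injective, hSF,
    card_nonrow0_idx hsort hbij]

end PosT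
end S13
namespace S13
section Final
variable {beta : List ℕ} {k : ℕ}

lemma cnt_posT (hsort : List.Pairwise (· ≥ ·) beta) (hk : beta.length ≤ k)
    (T : ↥(skewCells beta []) → Fin k) (p : ↥(skewCells beta [])) :
    cnt beta k (posT beta k hk T)
      ((iposD beta k (posT beta k hk T) (eB hsort p) : ℕ)) = (T p : ℕ) + 1 := by
  have hbij := posT_bijective hk T
  have hipos : iposD beta k (posT beta k hk T) (eB hsort p) = fT beta k T (eB hsort p) := by
    have := iposD_pos hbij (fT beta k T (eB hsort p))
    rwa [show posT beta k hk T (fT beta k T (eB hsort p)) = eB hsort p from posT_fT hk T _] at this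
  rw [hipos]
  have hc1q : c1 beta k T ((eB (k := k) hsort p : ℕ × ℕ)) = 2 * (T p : ℕ) + 1 := by
    rw [c1_nonrow0 T (eB_row_ne hsort p), tHat_eB hsort T p]
  unfold cnt
  conv_rhs => rw [← Finset.card_range ((T p : ℕ) + 1)]
  refine Finset.card_bij (fun (u : Fin (skewCells (k :: conj beta) []).card) _ =>
    ((posT beta k hk T u : ℕ × ℕ)).2) ?_ ?_ ?_
  · intro u hu
    obtain ⟨-, hlt, h0⟩ := Finset.mem_filter.mp hu
    rw [Finset.mem_range]
    have hkey : keyT beta k T ((posT beta k hk T u : ℕ × ℕ)) < keyT beta k T ((eB (k := k) hsort p : ℕ × ℕ)) := by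
      have h1 : u < fT beta k T (eB hsort p) := Fin.lt_def.mpr hlt
      have h2 := (posT_lt_iff hk T u (fT beta k T (eB hsort p))).mp h1
      rwa [show posT beta k hk T (fT beta k T (eB hsort p)) = eB hsort p from
        posT_fT hk T _] at h2
    rw [keyT_lt_iff hk T (posT beta k hk T u).2 (eB hsort p).2, hc1q, c1_row0 T h0] at hkey
    show ((posT beta k hk T u : ℕ × ℕ)).2 < (T p : ℕ) + 1
    omega
  · intro a ha b hb h
    obtain ⟨-, -, h0a⟩ := Finset.mem_filter.mp ha
    obtain ⟨-, -, h0b⟩ := Finset.mem_filter.mp hb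
    exact hbij.1 (Subtype.ext (Prod.ext (h0a.trans h0b.symm) h))
  · intro c hc
    have hck : c < k := by
      have := (T p).isLt
      have := Finset.mem_range.mp hc
      omega
    have hmem : (((0 : ℕ), c) : ℕ × ℕ) ∈ skewCells (k :: conj beta) [] := memL0_iff.mpr hck
    refine ⟨fT beta k T ⟨((0 : ℕ), c), hmem⟩, ?_, ?_⟩
    · refine Finset.mem_filter.mpr ⟨Finset.mem_univ _, ?_, ?_⟩
      · have hkey : keyT beta k T (((0 : ℕ), c) : ℕ × ℕ)
            < keyT beta k T ((eB (k := k) hsort p : ℕ × ℕ)) := by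
          rw [keyT_lt_iff hk T hmem (eB hsort p).2, hc1q, c1_row0 T rfl]
          left
          have := Finset.mem_range.mp hc
          omega
        have := idxT_mono T (q := ⟨((0 : ℕ), c), hmem⟩) (q' := eB hsort p) hkey
        show (fT beta k T ⟨((0 : ℕ), c), hmem⟩ : ℕ) < (fT beta k T (eB hsort p) : ℕ)
        exact this
      · show ((posT beta k hk T (fT beta k T ⟨((0 : ℕ), c), hmem⟩) : ℕ × ℕ)).1 = 0
        rw [show posT beta k hk T (fT beta k T ⟨((0 : ℕ), c), hmem⟩) = ⟨((0 : ℕ), c), hmem⟩ from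
          posT_fT hk T _]
    · show ((posT beta k hk T (fT beta k T ⟨((0 : ℕ), c), hmem⟩) : ℕ × ℕ)).2 = c
      rw [show posT beta k hk T (fT beta k T ⟨((0 : ℕ), c), hmem⟩) = ⟨((0 : ℕ), c), hmem⟩ from
        posT_fT hk T _]

lemma Phi_posT (hsort : List.Pairwise (· ≥ ·) beta) (hk : beta.length ≤ k)
    (T : ↥(skewCells beta []) → Fin k) :
    PhiD beta k hsort hk (posT beta k hk T) = T := by
  funext p
  apply Fin.ext
  show min (cnt beta k (posT beta k hk T)
      ((iposD beta k (posT beta k hk T) (eB hsort p) : ℕ)) - 1) (k - 1) = (T p : ℕ)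
  rw [cnt_posT hsort hk T p]
  have := (T p).isLt
  omega

section PhiSide
variable {pos : Fin (skewCells (k :: conj beta) []).card → ↥(skewCells (k :: conj beta) [])}

lemma cnt_lt_or_row_lt (hsort : List.Pairwise (· ≥ ·) beta)
    (hsyt : IsSYT (k :: conj beta) [] pos)
    (hdes : desStat (k :: conj beta) [] pos = beta.sum)
    {i j : Fin (skewCells (k :: conj beta) []).card} (hij : (i : ℕ) < (j : ℕ))
    (hrowj : ¬ ((pos j : ℕ × ℕ)).1 = 0) :
    cnt beta k pos (i : ℕ) < cnt beta k pos (j : ℕ) ∨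
      ((pos i : ℕ × ℕ)).1 < ((pos j : ℕ × ℕ)).1 := by
  by_cases hc : cnt beta k pos (i : ℕ) < cnt beta k pos (j : ℕ)
  · exact Or.inl hc
  · right
    have hmid : ∀ u : Fin (skewCells (k :: conj beta) []).card,
        (i : ℕ) < (u : ℕ) → (u : ℕ) ≤ (j : ℕ) → ¬ ((pos u : ℕ × ℕ)).1 = 0 := by
      intro u hu1 hu2 h0
      have hne : (u : ℕ) ≠ (j : ℕ) := by
        intro he
        have : u = j := Fin.ext he
        rw [this] at h0
        exact hrowj h0
      exact hc (cnt_lt u h0 (by omega) (by omega))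
    exact chain_aux hsort hsyt hdes ((j : ℕ) - (i : ℕ) - 1) i j (by omega) hmid

lemma cnt_ge1 (hsort : List.Pairwise (· ≥ ·) beta) (hsyt : IsSYT (k :: conj beta) [] pos)
    (hdes : desStat (k :: conj beta) [] pos = beta.sum)
    {j : Fin (skewCells (k :: conj beta) []).card} (hj : 0 < (j : ℕ)) :
    1 ≤ cnt beta k pos (j : ℕ) := by
  have hN : (0 : ℕ) < (skewCells (k :: conj beta) []).card := by
    have := j.isLt; omega
  have hzero : (⟨0, hN⟩ : Fin (skewCells (k :: conj beta) []).card) ∈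
      Finset.univ.filter (fun u : Fin (skewCells (k :: conj beta) []).card =>
        (u : ℕ) < (j : ℕ) ∧ ((pos u : ℕ × ℕ)).1 = 0) :=
    Finset.mem_filter.mpr ⟨Finset.mem_univ _, hj, row_pos_zero hsort hsyt hdes _ rfl⟩
  have := Finset.card_pos.mpr ⟨_, hzero⟩
  unfold cnt
  omega

lemma Phi_cond1 (hsort : List.Pairwise (· ≥ ·) beta) (hk : beta.length ≤ k)
    (hsyt : IsSYT (k :: conj beta) [] pos)
    (hdes : desStat (k :: conj beta) [] pos = beta.sum)
    (p p' : ↥(skewCells beta [])) (h1 : ((p : ℕ × ℕ)).1 = ((p' : ℕ × ℕ)).1)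
    (h2 : ((p : ℕ × ℕ)).2 ≤ ((p' : ℕ × ℕ)).2) :
    PhiD beta k hsort hk pos p ≤ PhiD beta k hsort hk pos p' := by
  have hbij := syt_bijective hsyt
  rcases Nat.eq_or_lt_of_le h2 with heq | hlt
  · rw [show p = p' from Subtype.ext (Prod.ext h1 heq)]
  · have hi := pos_iposD hbij (eB (k := k) hsort p)
    have hj := pos_iposD hbij (eB (k := k) hsort p')
    have hij := hsyt.2.2 (iposD beta k pos (eB hsort p)) (iposD beta k pos (eB hsort p'))
      (by rw [hi, hj]; exact h1) (by rw [hi, hj]; show (p : ℕ × ℕ).2 + 1 < (p' : ℕ × ℕ).2 + 1; omega)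
    have hcnt := cnt_mono (pos := pos) (le_of_lt (Fin.lt_def.mp hij))
    rw [Fin.le_def, PhiD_val hsort hk hsyt hdes, PhiD_val hsort hk hsyt hdes]
    omega

lemma Phi_cond2 (hsort : List.Pairwise (· ≥ ·) beta) (hk : beta.length ≤ k)
    (hsyt : IsSYT (k :: conj beta) [] pos)
    (hdes : desStat (k :: conj beta) [] pos = beta.sum)
    (p p' : ↥(skewCells beta [])) (h1 : ((p : ℕ × ℕ)).2 = ((p' : ℕ × ℕ)).2)
    (h2 : ((p : ℕ × ℕ)).1 < ((p' : ℕ × ℕ)).1) :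
    PhiD beta k hsort hk pos p < PhiD beta k hsort hk pos p' := by
  have hbij := syt_bijective hsyt
  have hi := pos_iposD hbij (eB (k := k) hsort p)
  have hj := pos_iposD hbij (eB (k := k) hsort p')
  have hij := hsyt.2.1 (iposD beta k pos (eB hsort p)) (iposD beta k pos (eB hsort p'))
    (by rw [hi, hj]; show (p : ℕ × ℕ).2 + 1 = (p' : ℕ × ℕ).2 + 1; omega)
    (by rw [hi, hj]; exact h2)
  have hcnt : cnt beta k pos ((iposD beta k pos (eB hsort p) : ℕ))
      < cnt beta k pos ((iposD beta k pos (eB hsort p') : ℕ)) := by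
    rcases cnt_lt_or_row_lt hsort hsyt hdes (Fin.lt_def.mp hij)
        (by rw [hj]; exact eB_row_ne hsort p') with h | h
    · exact h
    · exfalso
      rw [hi, hj] at h
      have : (p : ℕ × ℕ).2 + 1 < (p' : ℕ × ℕ).2 + 1 := h
      omega
  have hge := cnt_ipos_ge1 hsort hsyt hdes (eB (k := k) hsort p) (eB_row_ne hsort p)
  rw [Fin.lt_def, PhiD_val hsort hk hsyt hdes, PhiD_val hsort hk hsyt hdes]
  omega

lemma cnt_row0_val (hsyt : IsSYT (k :: conj beta) [] pos)
    (v : Fin (skewCells (k :: conj beta) []).card) (h0 : ((pos v : ℕ × ℕ)).1 = 0) :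
    cnt beta k pos (v : ℕ) = ((pos v : ℕ × ℕ)).2 := by
  have hbij := syt_bijective hsyt
  have h1 := cnt_i0 (pos := pos) hsyt (col_lt_of_row0 v h0)
  rw [← pos_eq_cell0 v h0, iposD_pos hbij] at h1
  exact h1

lemma cnt_nonrow0_val (hsort : List.Pairwise (· ≥ ·) beta) (hk : beta.length ≤ k)
    (hsyt : IsSYT (k :: conj beta) [] pos)
    (hdes : desStat (k :: conj beta) [] pos = beta.sum)
    (v : Fin (skewCells (k :: conj beta) []).card) (h0 : ¬ ((pos v : ℕ × ℕ)).1 = 0) :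
    cnt beta k pos (v : ℕ)
      = tHat beta k (PhiD beta k hsort hk pos) ((pos v : ℕ × ℕ)) + 1 := by
  have hbij := syt_bijective hsyt
  have h1 := cnt_ipos_nonrow0 hsort hk hsyt hdes (pos v) h0
  rwa [iposD_pos hbij] at h1

lemma key_lt_idx (hsort : List.Pairwise (· ≥ ·) beta) (hk : beta.length ≤ k)
    (hsyt : IsSYT (k :: conj beta) [] pos)
    (hdes : desStat (k :: conj beta) [] pos = beta.sum)
    (v w : Fin (skewCells (k :: conj beta) []).card)
    (hkey : keyT beta k (PhiD beta k hsort hk pos) ((pos v : ℕ × ℕ))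
      < keyT beta k (PhiD beta k hsort hk pos) ((pos w : ℕ × ℕ))) : v < w := by
  have hbij := syt_bijective hsyt
  set T := PhiD beta k hsort hk pos with hT
  rw [keyT_lt_iff hk T (pos v).2 (pos w).2] at hkey
  by_cases h0v : ((pos v : ℕ × ℕ)).1 = 0 <;> by_cases h0w : ((pos w : ℕ × ℕ)).1 = 0
  · -- both in row 0
    rw [c1_row0 T h0v, c1_row0 T h0w] at hkey
    have hcol : ((pos v : ℕ × ℕ)).2 < ((pos w : ℕ × ℕ)).2 := by omega
    exact hsyt.2.1 v w (h0v.trans h0w.symm) hcol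
  · -- v row 0, w not
    rw [c1_row0 T h0v, c1_nonrow0 T h0w] at hkey
    have hc : ((pos v : ℕ × ℕ)).2 < tHat beta k T ((pos w : ℕ × ℕ)) + 1 := by omega
    have hv := cnt_row0_val hsyt v h0v
    have hw := cnt_nonrow0_val hsort hk hsyt hdes w h0w
    rw [← hT] at hw
    rw [Fin.lt_def]
    by_contra hle
    have := cnt_mono (pos := pos) (show (w : ℕ) ≤ (v : ℕ) by omega)
    omega
  · -- w row 0, v not
    rw [c1_nonrow0 T h0v, c1_row0 T h0w] at hkey
    have hc : tHat beta k T ((pos v : ℕ × ℕ)) + 1 ≤ ((pos w : ℕ × ℕ)).2 := by omega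
    have hv := cnt_nonrow0_val hsort hk hsyt hdes v h0v
    have hw := cnt_row0_val hsyt w h0w
    rw [← hT] at hv
    rw [Fin.lt_def]
    by_contra hle
    have hwv : (w : ℕ) < (v : ℕ) := by
      rcases Nat.lt_or_ge (w : ℕ) (v : ℕ) with h | h
      · exact h
      · exfalso
        have : v = w := Fin.ext (by omega)
        rw [this] at h0v
        exact h0v h0w
    have := cnt_lt (pos := pos) w h0w (le_refl (w : ℕ)) hwv
    omega
  · -- both not in row 0
    rw [c1_nonrow0 T h0v, c1_nonrow0 T h0w] at hkey
    have hv := cnt_nonrow0_val hsort hk hsyt hdes v h0v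
    have hw := cnt_nonrow0_val hsort hk hsyt hdes w h0w
    rw [← hT] at hv hw
    rcases hkey with h | ⟨heq, h | ⟨heq2, hlt⟩⟩
    · rw [Fin.lt_def]
      by_contra hle
      have := cnt_mono (pos := pos) (show (w : ℕ) ≤ (v : ℕ) by omega)
      omega
    · -- rows strictly increase
      rw [Fin.lt_def]
      by_contra hle
      have hwv : (w : ℕ) < (v : ℕ) := by
        rcases Nat.lt_or_ge (w : ℕ) (v : ℕ) with h' | h'
        · exact h'
        · exfalso
          have : v = w := Fin.ext (by omega)
          rw [this] at h
          omega
      rcases cnt_lt_or_row_lt hsort hsyt hdes hwv h0v with h' | h'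
      · omega
      · omega
    · exact hsyt.2.1 v w heq2 hlt

lemma key_iff_idx (hsort : List.Pairwise (· ≥ ·) beta) (hk : beta.length ≤ k)
    (hsyt : IsSYT (k :: conj beta) [] pos)
    (hdes : desStat (k :: conj beta) [] pos = beta.sum)
    (v w : Fin (skewCells (k :: conj beta) []).card) :
    keyT beta k (PhiD beta k hsort hk pos) ((pos v : ℕ × ℕ))
      < keyT beta k (PhiD beta k hsort hk pos) ((pos w : ℕ × ℕ)) ↔ v < w := by
  constructor
  · exact key_lt_idx hsort hk hsyt hdes v w
  · intro hvw
    set T := PhiD beta k hsort hk pos with hT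
    rcases Nat.lt_trichotomy (keyT beta k T ((pos v : ℕ × ℕ))) (keyT beta k T ((pos w : ℕ × ℕ)))
      with h | h | h
    · exact h
    · exfalso
      have := keyT_inj hk T (pos v).2 (pos w).2 h
      have : v = w := hsyt.1 (Subtype.ext this)
      omega
    · exfalso
      have := key_lt_idx hsort hk hsyt hdes w v h
      omega

lemma idxT_pos_val (hsort : List.Pairwise (· ≥ ·) beta) (hk : beta.length ≤ k)
    (hsyt : IsSYT (k :: conj beta) [] pos)
    (hdes : desStat (k :: conj beta) [] pos = beta.sum)
    (u : Fin (skewCells (k :: conj beta) []).card) :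
    idxT beta k (PhiD beta k hsort hk pos) (pos u) = (u : ℕ) := by
  have hbij := syt_bijective hsyt
  set T := PhiD beta k hsort hk pos with hT
  unfold idxT
  conv_rhs => rw [← card_lt_idx (beta := beta) (k := k) (u : ℕ) u.isLt.le]
  refine Finset.card_bij (fun r hr => iposD beta k pos ⟨r, (Finset.mem_filter.mp hr).1⟩) ?_ ?_ ?_
  · intro r hr
    obtain ⟨hr1, hr2⟩ := Finset.mem_filter.mp hr
    refine Finset.mem_filter.mpr ⟨Finset.mem_univ _, ?_⟩
    have hpw := pos_iposD hbij (⟨r, hr1⟩ : ↥(skewCells (k :: conj beta) []))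
    have hkey : keyT beta k T ((pos (iposD beta k pos ⟨r, hr1⟩) : ℕ × ℕ))
        < keyT beta k T ((pos u : ℕ × ℕ)) := by
      rw [hpw]
      exact hr2
    have := key_lt_idx hsort hk hsyt hdes _ _ hkey
    exact Fin.lt_def.mp this
  · intro r hr r' hr' h
    have e1 := pos_iposD hbij (⟨r, (Finset.mem_filter.mp hr).1⟩ : ↥(skewCells (k :: conj beta) []))
    have e2 := pos_iposD hbij (⟨r', (Finset.mem_filter.mp hr').1⟩ : ↥(skewCells (k :: conj beta) []))
    have := congrArg pos h
    rw [e1, e2] at this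
    exact congrArg Subtype.val this
  · intro w hw
    have hwu := (Finset.mem_filter.mp hw).2
    have hmem : ((pos w : ℕ × ℕ)) ∈ skewCells (k :: conj beta) [] := (pos w).2
    have hkey : keyT beta k T ((pos w : ℕ × ℕ)) < keyT beta k T ((pos u : ℕ × ℕ)) :=
      (key_iff_idx hsort hk hsyt hdes w u).mpr (Fin.lt_def.mpr hwu)
    refine ⟨(pos w : ℕ × ℕ), Finset.mem_filter.mpr ⟨hmem, hkey⟩, ?_⟩
    exact iposD_pos hbij w

lemma posT_Phi (hsort : List.Pairwise (· ≥ ·) beta) (hk : beta.length ≤ k)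
    (hsyt : IsSYT (k :: conj beta) [] pos)
    (hdes : desStat (k :: conj beta) [] pos = beta.sum) :
    posT beta k hk (PhiD beta k hsort hk pos) = pos := by
  funext j
  have h1 : fT beta k (PhiD beta k hsort hk pos) (pos j) = j :=
    Fin.ext (idxT_pos_val hsort hk hsyt hdes j)
  calc posT beta k hk (PhiD beta k hsort hk pos) j
      = posT beta k hk (PhiD beta k hsort hk pos)
        (fT beta k (PhiD beta k hsort hk pos) (pos j)) := by rw [h1]
    _ = pos j := posT_fT hk _ _

end PhiSide

end Final
end S13
namespace S13

lemma sum_filter_lt_card {α : Type*} [LinearOrder α] (s : Finset α) :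
    ∑ b ∈ s, (s.filter (fun x => x < b)).card = s.card.choose 2 := by
  classical
  induction s using Finset.induction_on_max with
  | empty => simp
  | insert a s ha ih =>
    have hnotmem : a ∉ s := fun h => lt_irrefl a (ha a h)
    rw [Finset.sum_insert hnotmem]
    have h1 : (insert a s).filter (fun x => x < a) = s := by
      ext x
      simp only [Finset.mem_filter, Finset.mem_insert]
      constructor
      · rintro ⟨rfl | hx, hlt⟩
        · exact absurd hlt (lt_irrefl _)
        · exact hx
      · intro hx
        exact ⟨Or.inr hx, ha x hx⟩
    have h2 : ∀ x ∈ s, (insert a s).filter (fun y => y < x) = s.filter (fun y => y < x) := by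
      intro x hx
      rw [Finset.filter_insert, if_neg (lt_asymm (ha x hx))]
    rw [h1, Finset.sum_congr rfl (fun x hx => by rw [h2 x hx]), ih,
      Finset.card_insert_of_notMem hnotmem]
    have h11 : (s.card + 1).choose 2 = s.card.choose 1 + s.card.choose 2 :=
      Nat.choose_succ_succ _ _
    rw [Nat.choose_one_right] at h11
    omega

section Maj
variable {beta : List ℕ} {k : ℕ}
variable {pos : Fin (skewCells (k :: conj beta) []).card → ↥(skewCells (k :: conj beta) [])}

lemma maj_eq (hsort : List.Pairwise (· ≥ ·) beta) (hk : beta.length ≤ k)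
    (hsyt : IsSYT (k :: conj beta) [] pos)
    (hdes : desStat (k :: conj beta) [] pos = beta.sum) :
    majStat (k :: conj beta) [] pos
      = (beta.sum + 1).choose 2
        + ∑ p : ↥(skewCells beta []), (PhiD beta k hsort hk pos p : ℕ) := by
  have hbij := syt_bijective hsyt
  obtain ⟨hdeseq, hSF⟩ := desSet_eq_max hsort hsyt hdes
  set S := Finset.univ.filter (fun b : Fin (skewCells (k :: conj beta) []).card =>
    0 < (b : ℕ) ∧ ¬ ((pos b : ℕ × ℕ)).1 = 0) with hS
  have hcardS : S.card = beta.sum := by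
    rw [hSF]
    exact card_nonrow0_idx hsort hbij
  have hmaj : majStat (k :: conj beta) [] pos = ∑ j ∈ S, (j : ℕ) := by
    unfold majStat
    rw [hdeseq, Finset.sum_image (fun x _ y _ h => Fin.val_injective h)]
    rfl
  have hsum : ∑ p : ↥(skewCells beta []), (PhiD beta k hsort hk pos p : ℕ)
      = ∑ j ∈ S, (cnt beta k pos (j : ℕ) - 1) := by
    refine Finset.sum_bij (fun p _ => iposD beta k pos (eB hsort p)) ?_ ?_ ?_ ?_
    · intro p _
      refine Finset.mem_filter.mpr ⟨Finset.mem_univ _,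
        ipos_ne_zero hsort hsyt hdes _ (eB_row_ne hsort p), ?_⟩
      rw [pos_iposD hbij]
      exact eB_row_ne hsort p
    · intro p _ p' _ h
      have hpe := congrArg pos h
      rw [pos_iposD hbij, pos_iposD hbij] at hpe
      have hval := congrArg Subtype.val hpe
      have h1 : ((p : ℕ × ℕ)).2 + 1 = ((p' : ℕ × ℕ)).2 + 1 := congrArg Prod.fst hval
      have h2 : ((p : ℕ × ℕ)).1 = ((p' : ℕ × ℕ)).1 := congrArg Prod.snd hval
      exact Subtype.ext (Prod.ext h2 (by omega))
    · intro j hj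
      obtain ⟨-, hj1, hj2⟩ := Finset.mem_filter.mp hj
      refine ⟨toB hsort (pos j) hj2, Finset.mem_univ _, ?_⟩
      show iposD beta k pos (eB hsort (toB hsort (pos j) hj2)) = j
      rw [eB_toB hsort (pos j) hj2, iposD_pos hbij]
    · intro p _
      rw [PhiD_val hsort hk hsyt hdes]
  have hterm : ∀ j ∈ S, (cnt beta k pos (j : ℕ) - 1)
      + ((S.filter (fun x => x < j)).card + 1) = (j : ℕ) := by
    intro j hj
    obtain ⟨-, hj1, hj2⟩ := Finset.mem_filter.mp hj
    have hsplit := cnt_split (pos := pos) (j : ℕ) j.isLt.le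
    have hfilt : (Finset.univ.filter (fun u : Fin (skewCells (k :: conj beta) []).card =>
        (u : ℕ) < (j : ℕ) ∧ ¬ ((pos u : ℕ × ℕ)).1 = 0)) = S.filter (fun x => x < j) := by
      ext u
      simp only [hS, Finset.mem_filter, Finset.mem_univ, true_and]
      constructor
      · rintro ⟨h1, h2⟩
        refine ⟨⟨?_, h2⟩, Fin.lt_def.mpr h1⟩
        rcases Nat.eq_zero_or_pos (u : ℕ) with h | h
        · exact absurd (row_pos_zero hsort hsyt hdes u h) h2
        · exact h
      · rintro ⟨⟨h1, h2⟩, h3⟩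
        exact ⟨Fin.lt_def.mp h3, h2⟩
    have hge := cnt_ge1 hsort hsyt hdes hj1
    rw [hfilt] at hsplit
    omega
  have htot : ∑ j ∈ S, ((cnt beta k pos (j : ℕ) - 1)
      + ((S.filter (fun x => x < j)).card + 1)) = ∑ j ∈ S, (j : ℕ) :=
    Finset.sum_congr rfl hterm
  rw [Finset.sum_add_distrib, Finset.sum_add_distrib, Finset.sum_const, smul_eq_mul, mul_one,
    sum_filter_lt_card S] at htot
  have hchoose : (beta.sum + 1).choose 2 = beta.sum.choose 2 + beta.sum := by
    have h11 : (beta.sum + 1).choose 2 = beta.sum.choose 1 + beta.sum.choose 2 :=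
      Nat.choose_succ_succ _ _
    rw [Nat.choose_one_right] at h11
    omega
  rw [hmaj, hsum]
  rw [hcardS] at htot
  omega

end Maj
end S13
open S13
/-- Let `β` be a partition and `k` an integer at least the number of
parts of `β`.  Let `λ = (k, β'_1, β'_2, …)` be obtained by prepending `k` to the
conjugate partition `β'`.  Then
`q^{binom(|β|+1, 2)} · s_β(1, q, …, q^{k-1}) = f_{λ, |β|}(q)`. -/
theorem stmt13 (beta : List ℕ) (hsort : List.Pairwise (· ≥ ·) beta)
    (hpos : ∀ x ∈ beta, 0 < x) (k : ℕ) (hk : beta.length ≤ k) :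
    X ^ ((beta.sum + 1).choose 2) * schurSpec beta k = fPoly (k :: conj beta) beta.sum := by
  unfold fPoly fSkew schurSpec
  rw [Finset.mul_sum]
  refine Finset.sum_nbij' (i := fun T => posT beta k hk T)
    (j := fun pos => PhiD beta k hsort hk pos) ?_ ?_ ?_ ?_ ?_
  · intro T hT
    obtain ⟨-, hT1, hT2⟩ := Finset.mem_filter.mp hT
    refine Finset.mem_filter.mpr ⟨?_, posT_des hsort hpos hk T hT2⟩
    unfold SYTs
    exact Finset.mem_filter.mpr ⟨Finset.mem_univ _, posT_isSYT hsort hpos hk T hT1 hT2⟩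
  · intro pos hpos'
    obtain ⟨hmem, hdes⟩ := Finset.mem_filter.mp hpos'
    have hsyt : IsSYT (k :: conj beta) [] pos := (Finset.mem_filter.mp hmem).2
    exact Finset.mem_filter.mpr ⟨Finset.mem_univ _,
      fun p q h1 h2 => Phi_cond1 hsort hk hsyt hdes p q h1 h2,
      fun p q h1 h2 => Phi_cond2 hsort hk hsyt hdes p q h1 h2⟩
  · intro T hT
    exact Phi_posT hsort hk T
  · intro pos hpos'
    obtain ⟨hmem, hdes⟩ := Finset.mem_filter.mp hpos'
    have hsyt : IsSYT (k :: conj beta) [] pos := (Finset.mem_filter.mp hmem).2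
    exact posT_Phi hsort hk hsyt hdes
  · intro T hT
    obtain ⟨-, hT1, hT2⟩ := Finset.mem_filter.mp hT
    have hsyt := posT_isSYT hsort hpos hk T hT1 hT2
    have hdes := posT_des hsort hpos hk T hT2
    have hmaj := maj_eq hsort hk hsyt hdes
    rw [Phi_posT hsort hk T] at hmaj
    rw [hmaj, pow_add]
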